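/- Let d be a positive natural number and let F : EuclideanSpace ℝ (Fin d) → ℝ be three times continuously differentiable, with the norm of the third iterated Fréchet derivative bounded by M ≥ 0 at every point. Let x, x̃⁺, x̃⁻ ∈ EuclideanSpace ℝ (Fin d) and let K ⊆ Fin d be such that x̃⁺ₖ = xₖ and x̃⁻ₖ = xₖ for every k ∉ K (the decoys differ from x only on the swappable feature set K). For each coordinate i, define the decoy-enhanced saliency score Zᵢ = max(∂F/∂xᵢ(x̃⁺), ∂F/∂xᵢ(x̃⁻)) − min(∂F/∂xᵢ(x̃⁺), ∂F/∂xᵢ(x̃⁻)). Then for every i, | Zᵢ − |∑_{k ∈ K} (x̃⁺ₖ − x̃⁻ₖ) · (∂²F/∂xₖ∂xᵢ)(x)| | ≤ (M/2) · (‖x̃⁺ − x‖² + ‖x̃⁻ − x‖²). -/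

import Mathlib

open scoped BigOperators

/-- First-order Taylor bound for a `C¹` function whose derivative is
`M`-Lipschitz. -/
lemma taylor_one_lip {E : Type*} [NormedAddCommGroup E] [NormedSpace ℝ E]
    (g : E → ℝ) (hg : ContDiff ℝ 1 g) (M : ℝ) (hM : 0 ≤ M)
    (hlip : ∀ a b : E, ‖fderiv ℝ g a - fderiv ℝ g b‖ ≤ M * ‖a - b‖)
    (x y : E) :
    |g y - g x - fderiv ℝ g x (y - x)| ≤ M / 2 * ‖y - x‖ ^ 2 := by
  set v := y - x with hv
  have hdg : Differentiable ℝ g := hg.differentiable one_ne_zero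
  have hcont : Continuous (fderiv ℝ g) := hg.continuous_fderiv one_ne_zero
  set φ' : ℝ → ℝ := fun t => fderiv ℝ g (x + t • v) v - fderiv ℝ g x v with hφ'
  have hγ : ∀ t : ℝ, HasDerivAt (fun s : ℝ => x + s • v) v t := by
    intro t
    simpa using ((hasDerivAt_id t).smul_const v).const_add x
  have hφ : ∀ t : ℝ,
      HasDerivAt (fun s => g (x + s • v) - s * fderiv ℝ g x v) (φ' t) t := by
    intro t
    exact ((hdg _).hasFDerivAt.comp_hasDerivAt t (hγ t)).sub
      (hasDerivAt_mul_const _)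
  have hγc : Continuous fun t : ℝ => x + t • v := by continuity
  have hφ'cont : Continuous φ' :=
    (((hcont.comp hγc).clm_apply continuous_const)).sub continuous_const
  have key : g y - g x - fderiv ℝ g x v = ∫ t in (0:ℝ)..1, φ' t := by
    rw [intervalIntegral.integral_eq_sub_of_hasDerivAt (fun t _ => hφ t)
      (hφ'cont.intervalIntegrable 0 1)]
    have hxy : x + v = y := by simp [hv]
    simp only [one_smul, zero_smul, add_zero, zero_mul, sub_zero, one_mul, hxy]
    ring
  have hb : ∀ t ∈ Set.uIoc (0:ℝ) 1, ‖φ' t‖ ≤ M * ‖v‖ ^ 2 * t := by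
    intro t ht
    rw [Set.uIoc_of_le (by norm_num : (0:ℝ) ≤ 1)] at ht
    have ht0 : 0 < t := ht.1
    calc ‖φ' t‖ = ‖(fderiv ℝ g (x + t • v) - fderiv ℝ g x) v‖ := by
          simp [hφ', ContinuousLinearMap.sub_apply]
      _ ≤ ‖fderiv ℝ g (x + t • v) - fderiv ℝ g x‖ * ‖v‖ :=
          ContinuousLinearMap.le_opNorm _ _
      _ ≤ (M * ‖x + t • v - x‖) * ‖v‖ := by
          gcongr; exact hlip _ _
      _ = M * ‖v‖ ^ 2 * t := by
          rw [add_sub_cancel_left, norm_smul, Real.norm_eq_abs,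
            abs_of_pos ht0]
          ring
  have hbint : IntervalIntegrable (fun t => M * ‖v‖ ^ 2 * t) MeasureTheory.volume 0 1 :=
    (continuous_const.mul continuous_id).intervalIntegrable 0 1
  have hnorm : ‖∫ t in (0:ℝ)..1, φ' t‖ ≤ ∫ t in (0:ℝ)..1, M * ‖v‖ ^ 2 * t := by
    refine le_trans (intervalIntegral.norm_integral_le_of_norm_le zero_le_one
      (Filter.Eventually.of_forall fun t ht =>
        hb t (by rw [Set.uIoc_of_le zero_le_one]; exact ht)) hbint) le_rfl
  have hint : (∫ t in (0:ℝ)..1, M * ‖v‖ ^ 2 * t) = M / 2 * ‖v‖ ^ 2 := by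
    rw [intervalIntegral.integral_const_mul, integral_id]
    ring
  rw [key, ← Real.norm_eq_abs]
  rw [hint] at hnorm
  exact hnorm

/-- Theorem 1 of the paper (explicit-constant instantiation): the
decoy-enhanced saliency score `Zᵢ`, defined as the range of the vanilla
gradient saliency scores of the two decoys `x̃⁺` and `x̃⁻` (which agree with
`x` off the swappable feature set `K`), deviates from the magnitude of the
Hessian-weighted sum `∑_{k ∈ K} (x̃⁺ₖ - x̃⁻ₖ)(H_x)_{k,i}` by at most
`(M/2)(‖x̃⁺ - x‖² + ‖x̃⁻ - x‖²)`, where `M` bounds the third iterated Fréchet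
derivative of `F`. -/
theorem decoy_saliency_hessian_bound
    (d : ℕ) (hd : 0 < d)
    (F : EuclideanSpace ℝ (Fin d) → ℝ) (M : ℝ) (hM : 0 ≤ M)
    (hF : ContDiff ℝ 3 F)
    (hM3 : ∀ z : EuclideanSpace ℝ (Fin d), ‖iteratedFDeriv ℝ 3 F z‖ ≤ M)
    (x xp xm : EuclideanSpace ℝ (Fin d)) (K : Finset (Fin d))
    (hxp : ∀ k : Fin d, k ∉ K → xp k = x k)
    (hxm : ∀ k : Fin d, k ∉ K → xm k = x k)
    (Z : Fin d → ℝ)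
    (hZ : ∀ i : Fin d,
      Z i = max (fderiv ℝ F xp (EuclideanSpace.single i 1))
                (fderiv ℝ F xm (EuclideanSpace.single i 1))
          - min (fderiv ℝ F xp (EuclideanSpace.single i 1))
                (fderiv ℝ F xm (EuclideanSpace.single i 1)))
    (i : Fin d) :
    abs (Z i - |∑ k ∈ K, (xp k - xm k) *
        fderiv ℝ (fun z => fderiv ℝ F z (EuclideanSpace.single i 1)) x
          (EuclideanSpace.single k 1)|)
      ≤ M / 2 * (‖xp - x‖ ^ 2 + ‖xm - x‖ ^ 2) := by
  set g : EuclideanSpace ℝ (Fin d) → ℝ :=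
    fun z => fderiv ℝ F z (EuclideanSpace.single i 1) with hg_def
  set L : (EuclideanSpace ℝ (Fin d) →L[ℝ] ℝ) →L[ℝ] ℝ :=
    ContinuousLinearMap.apply ℝ ℝ (EuclideanSpace.single i 1) with hL_def
  have hDF : ContDiff ℝ 2 (fderiv ℝ F) := hF.fderiv_right (by norm_num)
  have hD2F : ContDiff ℝ 1 (fderiv ℝ (fderiv ℝ F)) := hDF.fderiv_right (by norm_num)
  have hg : ContDiff ℝ 1 g := (L.contDiff.comp hDF).of_le (by norm_num)
  have hDg : ∀ z, fderiv ℝ g z = L.comp (fderiv ℝ (fderiv ℝ F) z) := by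
    intro z
    have h1 : HasFDerivAt (fderiv ℝ F) (fderiv ℝ (fderiv ℝ F) z) z :=
      ((hDF.differentiable two_ne_zero) z).hasFDerivAt
    exact (L.hasFDerivAt.comp z h1).fderiv
  have hes : ‖EuclideanSpace.single i (1:ℝ)‖ = 1 := by
    rw [EuclideanSpace.norm_single]; norm_num
  have hLn : ‖L‖ ≤ 1 := by
    apply ContinuousLinearMap.opNorm_le_bound _ zero_le_one
    intro u
    have := u.le_opNorm (EuclideanSpace.single i (1:ℝ))
    rw [hes] at this
    show ‖u (EuclideanSpace.single i (1:ℝ))‖ ≤ 1 * ‖u‖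
    simpa [mul_comm] using this
  -- third derivative bound
  letI : NormedAddCommGroup (EuclideanSpace ℝ (Fin d) →L[ℝ] EuclideanSpace ℝ (Fin d) →L[ℝ] ℝ) := inferInstance
  letI : NormedSpace ℝ (EuclideanSpace ℝ (Fin d) →L[ℝ] EuclideanSpace ℝ (Fin d) →L[ℝ] ℝ) := inferInstance
  have hD3 : ∀ z, ‖fderiv ℝ (fderiv ℝ (fderiv ℝ F)) z‖ ≤ M := by
    intro z
    have h2 : ‖iteratedFDeriv ℝ 2 (fderiv ℝ F) z‖ ≤ M := by
      rw [norm_iteratedFDeriv_fderiv]; exact hM3 z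
    apply ContinuousLinearMap.opNorm_le_bound _ hM
    intro a
    rw [mul_comm]
    apply ContinuousLinearMap.opNorm_le_bound _ (by positivity)
    intro b
    have happ := iteratedFDeriv_two_apply (𝕜 := ℝ) (fderiv ℝ F) z ![a, b]
    have hle := (iteratedFDeriv ℝ 2 (fderiv ℝ F) z).le_opNorm ![a, b]
    rw [happ] at hle
    simp only [Fin.prod_univ_two, Matrix.cons_val_zero, Matrix.cons_val_one,
      Matrix.head_cons] at hle
    calc ‖fderiv ℝ (fderiv ℝ (fderiv ℝ F)) z a b‖
        ≤ ‖iteratedFDeriv ℝ 2 (fderiv ℝ F) z‖ * (‖a‖ * ‖b‖) := by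
          simpa [mul_assoc] using hle
      _ ≤ M * (‖a‖ * ‖b‖) := by gcongr
      _ = ‖a‖ * M * ‖b‖ := by ring
  -- Lipschitz bound for fderiv g
  have hlipg : ∀ a b, ‖fderiv ℝ g a - fderiv ℝ g b‖ ≤ M * ‖a - b‖ := by
    intro a b
    have hlip2 : ‖fderiv ℝ (fderiv ℝ F) a - fderiv ℝ (fderiv ℝ F) b‖ ≤ M * ‖a - b‖ := by
      apply convex_univ.norm_image_sub_le_of_norm_fderiv_le
        (fun z _ => (hD2F.differentiable one_ne_zero) z)
        (fun z _ => hD3 z) (Set.mem_univ b) (Set.mem_univ a)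
    rw [hDg a, hDg b, ← ContinuousLinearMap.comp_sub]
    calc ‖L.comp (fderiv ℝ (fderiv ℝ F) a - fderiv ℝ (fderiv ℝ F) b)‖
        ≤ ‖L‖ * ‖fderiv ℝ (fderiv ℝ F) a - fderiv ℝ (fderiv ℝ F) b‖ :=
          L.opNorm_comp_le (fderiv ℝ (fderiv ℝ F) a - fderiv ℝ (fderiv ℝ F) b)
      _ ≤ 1 * (M * ‖a - b‖) := by
          apply mul_le_mul hLn hlip2 (norm_nonneg _) zero_le_one
      _ = M * ‖a - b‖ := one_mul _
  -- Taylor bounds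
  have hRp := taylor_one_lip g hg M hM hlipg x xp
  have hRm := taylor_one_lip g hg M hM hlipg x xm
  -- the Hessian sum
  have hrepr : xp - xm = ∑ k ∈ K, (xp k - xm k) • EuclideanSpace.single k (1:ℝ) := by
    ext j
    have hs := map_sum (EuclideanSpace.proj j : EuclideanSpace ℝ (Fin d) →L[ℝ] ℝ)
      (fun k => (xp k - xm k) • EuclideanSpace.single k (1:ℝ)) K
    have hproj : ∀ v : EuclideanSpace ℝ (Fin d), EuclideanSpace.proj j v = v j :=
      fun v => rfl
    rw [hproj] at hs
    rw [PiLp.sub_apply, hs]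
    simp only [map_smul, hproj, PiLp.smul_apply, EuclideanSpace.single_apply,
      smul_eq_mul, mul_ite, mul_one, mul_zero, Finset.sum_ite_eq]
    by_cases hj : j ∈ K
    · simp [hj]
    · simp [hj, hxp j hj, hxm j hj]
  have hsum : ∑ k ∈ K, (xp k - xm k) * fderiv ℝ g x (EuclideanSpace.single k 1)
      = fderiv ℝ g x (xp - xm) := by
    rw [hrepr, map_sum]
    exact Finset.sum_congr rfl fun k _ => by rw [ContinuousLinearMap.map_smul]; rfl
  have hZi : Z i = |g xp - g xm| := by
    rw [hZ i, max_sub_min_eq_abs, abs_sub_comm]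
  have hAB : fderiv ℝ g x (xp - x) - fderiv ℝ g x (xm - x) = fderiv ℝ g x (xp - xm) := by
    rw [← map_sub]; congr 1; abel
  calc abs (Z i - |∑ k ∈ K, (xp k - xm k) *
        fderiv ℝ g x (EuclideanSpace.single k 1)|)
      = |(|g xp - g xm|) - (|fderiv ℝ g x (xp - xm)|)| := by rw [hZi, hsum]
    _ ≤ |(g xp - g xm) - fderiv ℝ g x (xp - xm)| := abs_abs_sub_abs_le_abs_sub _ _
    _ = |(g xp - g x - fderiv ℝ g x (xp - x)) - (g xm - g x - fderiv ℝ g x (xm - x))| := by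
        rw [← hAB]; ring_nf
    _ ≤ |g xp - g x - fderiv ℝ g x (xp - x)| + |g xm - g x - fderiv ℝ g x (xm - x)| :=
        abs_sub _ _
    _ ≤ M / 2 * ‖xp - x‖ ^ 2 + M / 2 * ‖xm - x‖ ^ 2 := add_le_add hRp hRm
    _ = M / 2 * (‖xp - x‖ ^ 2 + ‖xm - x‖ ^ 2) := by ring
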